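/- arXiv:1811.01058 — 3 statements merged into one kernel-verified Lean document; each statement's English description precedes it below -/
import Mathlib

section
/- For closed subgroups K and K′ of G and elements g, h ∈ G, the containment Fix(K) ⊇ ρ(g⁻¹h)(Fix(K′)) holds if and only if h⁻¹gKg⁻¹h ⊆ K′. In particular, if this containment of fixed spaces holds then some G-conjugate of K is contained in K′. -/
variable {G : Type*} [Group G] {V : Type*} [AddCommGroup V] [Module ℂ V]

def fixedSpace (ρ : Representation ℂ G V) (H : Subgroup G) : Submodule ℂ V where
  carrier := {v | ∀ h ∈ H, ρ h v = v}
  add_mem' := by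
    intro a b ha hb h hh
    rw [map_add, ha h hh, hb h hh]
  zero_mem' := by
    intro h hh
    exact map_zero _
  smul_mem' := by
    intro c a ha h hh
    rw [map_smul, ha h hh]

def IsClosedSubgroup (ρ : Representation ℂ G V) (H : Subgroup G) : Prop :=
  ∀ K : Subgroup G, H ≤ K → fixedSpace ρ K = fixedSpace ρ H → K = H

lemma mem_fixedSpace {ρ : Representation ℂ G V} {H : Subgroup G} {v : V} :
    v ∈ fixedSpace ρ H ↔ ∀ h ∈ H, ρ h v = v := Iff.rfl

lemma fixedSpace_antitone {ρ : Representation ℂ G V} {H K : Subgroup G} (hle : H ≤ K) :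
    fixedSpace ρ K ≤ fixedSpace ρ H := fun v hv x hx => hv x (hle hx)

/-- The stabilizer of a vector as a subgroup. -/
def stabSub (ρ : Representation ℂ G V) (v : V) : Subgroup G where
  carrier := {x | ρ x v = v}
  one_mem' := by simp
  mul_mem' := by
    intro a b ha hb
    simp only [Set.mem_setOf_eq] at *
    rw [map_mul, Module.End.mul_apply, hb, ha]
  inv_mem' := by
    intro a ha
    simp only [Set.mem_setOf_eq] at *
    calc ρ a⁻¹ v = ρ a⁻¹ (ρ a v) := by rw [ha]
    _ = v := by rw [← Module.End.mul_apply, ← map_mul, inv_mul_cancel, map_one, Module.End.one_apply]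

lemma conj_comp (c : G) :
    (MulAut.conj c⁻¹).toMonoidHom.comp (MulAut.conj c).toMonoidHom = MonoidHom.id G := by
  ext x; simp; group

lemma conj_map_map (c : G) (H : Subgroup G) :
    (H.map (MulAut.conj c).toMonoidHom).map (MulAut.conj c⁻¹).toMonoidHom = H := by
  rw [Subgroup.map_map, conj_comp, Subgroup.map_id]

lemma map_fixedSpace_conj (ρ : Representation ℂ G V) (c : G) (H : Subgroup G) :
    (fixedSpace ρ H).map (ρ c) = fixedSpace ρ (H.map (MulAut.conj c).toMonoidHom) := by
  ext v
  constructor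
  · rintro ⟨w, hw, rfl⟩ x hx
    rcases Subgroup.mem_map.mp hx with ⟨k, hk, rfl⟩
    simp only [MulEquiv.coe_toMonoidHom, MulAut.conj_apply]
    calc ρ (c * k * c⁻¹) (ρ c w) = ρ (c * k * c⁻¹ * c) w := by
          rw [← Module.End.mul_apply, ← map_mul]
    _ = ρ c (ρ k w) := by rw [← Module.End.mul_apply, ← map_mul]; group
    _ = ρ c w := by rw [hw k hk]
  · intro hv
    refine ⟨ρ c⁻¹ v, ?_, ?_⟩
    · intro k hk
      have := hv (c * k * c⁻¹) (Subgroup.mem_map.mpr ⟨k, hk, by simp⟩)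
      calc ρ k (ρ c⁻¹ v) = ρ (c⁻¹ * (c * k * c⁻¹)) v := by
            rw [← Module.End.mul_apply, ← map_mul]; group
      _ = ρ c⁻¹ (ρ (c * k * c⁻¹) v) := by rw [← Module.End.mul_apply, ← map_mul]
      _ = ρ c⁻¹ v := by rw [this]
    · rw [← Module.End.mul_apply, ← map_mul, mul_inv_cancel, map_one, Module.End.one_apply]

lemma isClosed_conj {ρ : Representation ℂ G V} {H : Subgroup G}
    (hH : IsClosedSubgroup ρ H) (c : G) :
    IsClosedSubgroup ρ (H.map (MulAut.conj c).toMonoidHom) := by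
  intro L hle hfixeq
  have h1 : H ≤ L.map (MulAut.conj c⁻¹).toMonoidHom := by
    rw [← conj_map_map c H]
    exact Subgroup.map_mono hle
  have h2 : fixedSpace ρ (L.map (MulAut.conj c⁻¹).toMonoidHom) = fixedSpace ρ H := by
    rw [← map_fixedSpace_conj, hfixeq, map_fixedSpace_conj, conj_map_map]
  have := hH _ h1 h2
  calc L = (L.map (MulAut.conj c⁻¹).toMonoidHom).map (MulAut.conj c⁻¹⁻¹).toMonoidHom :=
        (conj_map_map c⁻¹ L).symm
  _ = H.map (MulAut.conj c⁻¹⁻¹).toMonoidHom := by rw [this]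
  _ = H.map (MulAut.conj c).toMonoidHom := by rw [inv_inv]

lemma fixedSpace_sup_eq {ρ : Representation ℂ G V} {A K : Subgroup G}
    (h : fixedSpace ρ A ≤ fixedSpace ρ K) :
    fixedSpace ρ (A ⊔ K) = fixedSpace ρ A := by
  refine le_antisymm (fixedSpace_antitone le_sup_left) ?_
  intro v hv
  have hst : A ⊔ K ≤ stabSub ρ v := sup_le (fun x hx => hv x hx) (fun x hx => h hv x hx)
  exact fun x hx => hst hx

lemma le_of_fixedSpace_le {ρ : Representation ℂ G V} {A K : Subgroup G}
    (hA : IsClosedSubgroup ρ A) (h : fixedSpace ρ A ≤ fixedSpace ρ K) : K ≤ A := by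
  have := hA (A ⊔ K) le_sup_left (fixedSpace_sup_eq h)
  rw [← this]
  exact le_sup_right

theorem fixedSpace_map_le_iff_conj_le
    [Fintype G] [FiniteDimensional ℂ V] (ρ : Representation ℂ G V)
    (hfaith : Function.Injective ρ) (hfix : fixedSpace ρ ⊤ = ⊥)
    (K K' : Subgroup G) (hK : IsClosedSubgroup ρ K) (hK' : IsClosedSubgroup ρ K')
    (g h : G) :
    ((fixedSpace ρ K').map (ρ (g⁻¹ * h)) ≤ fixedSpace ρ K ↔
      K.map (MulAut.conj (h⁻¹ * g)).toMonoidHom ≤ K') ∧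
    ((fixedSpace ρ K').map (ρ (g⁻¹ * h)) ≤ fixedSpace ρ K →
      ∃ a : G, K.map (MulAut.conj a).toMonoidHom ≤ K') := by
  have hinv : g⁻¹ * h = (h⁻¹ * g)⁻¹ := by group
  set c := h⁻¹ * g with hc
  have hmap : (fixedSpace ρ K').map (ρ (g⁻¹ * h))
      = fixedSpace ρ (K'.map (MulAut.conj c⁻¹).toMonoidHom) := by
    rw [hinv, map_fixedSpace_conj]
  have hiff : (fixedSpace ρ K').map (ρ (g⁻¹ * h)) ≤ fixedSpace ρ K ↔
      K.map (MulAut.conj c).toMonoidHom ≤ K' := by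
    rw [hmap]
    constructor
    · intro hle
      have hKle : K ≤ K'.map (MulAut.conj c⁻¹).toMonoidHom :=
        le_of_fixedSpace_le (isClosed_conj hK' c⁻¹) hle
      have := Subgroup.map_mono (f := (MulAut.conj c).toMonoidHom) hKle
      rwa [show (K'.map (MulAut.conj c⁻¹).toMonoidHom).map (MulAut.conj c).toMonoidHom = K' by
        have h2 := conj_map_map c⁻¹ K'
        rwa [inv_inv] at h2] at this
    · intro hle
      have hKle : K ≤ K'.map (MulAut.conj c⁻¹).toMonoidHom := by
        have := Subgroup.map_mono (f := (MulAut.conj c⁻¹).toMonoidHom) hle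
        rwa [conj_map_map] at this
      exact fixedSpace_antitone hKle
  exact ⟨hiff, fun hle => ⟨c, hiff.mp hle⟩⟩
end

section
/- Let K ≤ G be any subgroup, 1 ≤ i₁ < ⋯ < i_k ≤ n and g₁,…,g_k ∈ G, with either k ≥ 2 or K ≠ {e}. Then H^K(i₁^{g₁K},…,i_k^{g_kK}) = (⋂_{j=2}^{k} H(i₁, i_j, g_j g₁⁻¹)) ∩ (⋂_{κ ∈ K, κ ≠ e} H(i₁, i₁, g₁ κ g₁⁻¹)). In particular every such subspace H^K(i₁^{g₁K},…,i_k^{g_kK}) is an intersection of members of the generalized Dowling arrangement 𝓗(n,G,V). -/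
variable {G : Type*} [Group G] {V : Type*} [AddCommGroup V] [Module ℂ V]

/-- The subspace `H^K(i₁^{g₁K},…,i_k^{g_kK})` of `V^n`: tuples `w` such that there is
`v ∈ Fix(K)` with `w (i j) = ρ (g j) v` for all `j`. -/
def HKsub (ρ : Representation ℂ G V) {n k : ℕ} (K : Subgroup G)
    (i : Fin k → Fin n) (g : Fin k → G) : Submodule ℂ (Fin n → V) where
  carrier := {w | ∃ v, v ∈ fixedSpace ρ K ∧ ∀ j, w (i j) = ρ (g j) v}
  add_mem' := by
    rintro w₁ w₂ ⟨v₁, hv₁, h₁⟩ ⟨v₂, hv₂, h₂⟩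
    exact ⟨v₁ + v₂, (fixedSpace ρ K).add_mem hv₁ hv₂, fun j => by
      simp only [Pi.add_apply, map_add, h₁ j, h₂ j]⟩
  zero_mem' :=
    ⟨0, (fixedSpace ρ K).zero_mem, fun j => by simp⟩
  smul_mem' := by
    rintro c w ⟨v, hv, h⟩
    exact ⟨c • v, (fixedSpace ρ K).smul_mem c hv, fun j => by
      simp only [Pi.smul_apply, map_smul, h j]⟩

/-- The subspace `H(i,j,g) = {(v₁,…,v_n) ∈ V^n : v_j = ρ(g) v_i}` of `V^n`. -/
def Hsub (ρ : Representation ℂ G V) {n : ℕ} (i j : Fin n) (g : G) :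
    Submodule ℂ (Fin n → V) where
  carrier := {w | w j = ρ g (w i)}
  add_mem' := by
    intro w₁ w₂ h₁ h₂
    simp only [Set.mem_setOf_eq, Pi.add_apply, map_add] at *
    rw [h₁, h₂]
  zero_mem' := by simp
  smul_mem' := by
    intro c w hw
    simp only [Set.mem_setOf_eq, Pi.smul_apply, map_smul] at *
    rw [hw]

/-- The generalized Dowling arrangement 𝓗(n,G,V): the subspaces `H(i,j,g)` for
`i < j`, `g ∈ G`, together with the subspaces `H(i,i,g)` for `g ≠ e`. -/
def DowlingArrangement (ρ : Representation ℂ G V) (n : ℕ) :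
    Set (Submodule ℂ (Fin n → V)) :=
  {W | (∃ i j : Fin n, ∃ g : G, i < j ∧ W = Hsub ρ i j g) ∨
       (∃ i : Fin n, ∃ g : G, g ≠ 1 ∧ W = Hsub ρ i i g)}

/-!
STATEMENT 7: For a subgroup K ≤ G, strictly increasing indices (encoded by the
strictly monotone `i : Fin (k+1) → Fin n`) and `g : Fin (k+1) → G`, with either
at least two indices or `K ≠ {e}`:
  H^K(i₁^{g₁K},…,i_k^{g_kK})
    = (⋂_{j=2}^{k} H(i₁, i_j, g_j g₁⁻¹)) ∩ (⋂_{κ ∈ K, κ ≠ e} H(i₁, i₁, g₁ κ g₁⁻¹)),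
and in particular `H^K(…)` is an intersection of a nonempty family of members of
the generalized Dowling arrangement 𝓗(n,G,V).
-/
theorem HKsub_eq_inf_DowlingArrangement
    [Fintype G] [FiniteDimensional ℂ V] (ρ : Representation ℂ G V)
    (hfaith : Function.Injective ρ) (hfix : fixedSpace ρ ⊤ = ⊥)
    (n k : ℕ) (K : Subgroup G) (i : Fin (k + 1) → Fin n) (hi : StrictMono i)
    (g : Fin (k + 1) → G) (hcond : 1 ≤ k ∨ K ≠ ⊥) :
    HKsub ρ K i g =
      (⨅ r : Fin k, Hsub ρ (i 0) (i r.succ) (g r.succ * (g 0)⁻¹)) ⊓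
      (⨅ κ ∈ {x : G | x ∈ K ∧ x ≠ 1}, Hsub ρ (i 0) (i 0) (g 0 * κ * (g 0)⁻¹)) ∧
    ∃ S : Set (Submodule ℂ (Fin n → V)),
      S ⊆ DowlingArrangement ρ n ∧ S.Nonempty ∧ HKsub ρ K i g = sInf S := by
  have main : HKsub ρ K i g =
      (⨅ r : Fin k, Hsub ρ (i 0) (i r.succ) (g r.succ * (g 0)⁻¹)) ⊓
      (⨅ κ ∈ {x : G | x ∈ K ∧ x ≠ 1}, Hsub ρ (i 0) (i 0) (g 0 * κ * (g 0)⁻¹)) := by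
    ext w
    simp only [Submodule.mem_inf, Submodule.mem_iInf]
    constructor
    · rintro ⟨v, hv, h⟩
      refine ⟨fun r => ?_, fun κ hκ => ?_⟩
      · show w (i r.succ) = ρ (g r.succ * (g 0)⁻¹) (w (i 0))
        rw [h 0, h r.succ, ← Module.End.mul_apply, ← map_mul, inv_mul_cancel_right]
      · show w (i 0) = ρ (g 0 * κ * (g 0)⁻¹) (w (i 0))
        rw [h 0, ← Module.End.mul_apply, ← map_mul]
        have hg : g 0 * κ * (g 0)⁻¹ * g 0 = g 0 * κ := by group
        rw [hg, map_mul, Module.End.mul_apply, hv κ hκ.1]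
    · rintro ⟨h1, h2⟩
      refine ⟨ρ ((g 0)⁻¹) (w (i 0)), ?_, ?_⟩
      · intro κ hκ
        by_cases hne : κ = 1
        · simp [hne]
        · have h2' : w (i 0) = ρ (g 0 * κ * (g 0)⁻¹) (w (i 0)) := h2 κ ⟨hκ, hne⟩
          calc ρ κ (ρ ((g 0)⁻¹) (w (i 0)))
              = ρ ((g 0)⁻¹ * (g 0 * κ * (g 0)⁻¹)) (w (i 0)) := by
                rw [← Module.End.mul_apply, ← map_mul]; congr 1; group
            _ = ρ ((g 0)⁻¹) (ρ (g 0 * κ * (g 0)⁻¹) (w (i 0))) := by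
                rw [map_mul, Module.End.mul_apply]
            _ = ρ ((g 0)⁻¹) (w (i 0)) := by rw [← h2']
      · intro j
        refine Fin.cases ?_ ?_ j
        · rw [← Module.End.mul_apply, ← map_mul, mul_inv_cancel, map_one,
            Module.End.one_apply]
        · intro r
          have := h1 r
          rw [show w (i r.succ) = ρ (g r.succ * (g 0)⁻¹) (w (i 0)) from h1 r,
            map_mul, Module.End.mul_apply]
  refine ⟨main, ?_⟩
  refine ⟨(Set.range fun r : Fin k => Hsub ρ (i 0) (i r.succ) (g r.succ * (g 0)⁻¹)) ∪
    ((fun κ => Hsub ρ (i 0) (i 0) (g 0 * κ * (g 0)⁻¹)) '' {x : G | x ∈ K ∧ x ≠ 1}),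
    ?_, ?_, ?_⟩
  · rintro W (⟨r, rfl⟩ | ⟨κ, ⟨hκ, hne⟩, rfl⟩)
    · exact Or.inl ⟨i 0, i r.succ, g r.succ * (g 0)⁻¹, hi (Fin.succ_pos r), rfl⟩
    · exact Or.inr ⟨i 0, g 0 * κ * (g 0)⁻¹,
        fun h => hne (conj_eq_one_iff.mp h), rfl⟩
  · rcases hcond with hk | hK
    · exact ⟨_, Or.inl (Set.mem_range_self (⟨0, hk⟩ : Fin k))⟩
    · obtain ⟨⟨κ, hκ⟩, hne⟩ := Subgroup.ne_bot_iff_exists_ne_one.mp hK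
      exact ⟨_, Or.inr ⟨κ, ⟨hκ, fun h => hne (Subtype.ext h)⟩, rfl⟩⟩
  · rw [main, sInf_union, sInf_range, sInf_image]
end

section
/- Let A ⊆ V^n be an intersection of a nonempty family of members of the generalized Dowling arrangement 𝓗(n,G,V). Then A equals the intersection of the minimal (with respect to inclusion) elements of 𝒢′ containing A, and this intersection is transversal: the codimension of A in V^n equals the sum of the codimensions of these minimal elements of 𝒢′. -/
variable {G : Type*} [Group G] {V : Type*} [AddCommGroup V] [Module ℂ V]

/-- The family 𝒢′ of subspaces `H^K(i₁^{g₁K},…,i_k^{g_kK})` of `V^n`, where `K` is a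
closed subgroup of `G`, the indices are strictly increasing, and either `k ≥ 2`
or (`k = 1` and `K ≠ {e}`). -/
def GPrime (ρ : Representation ℂ G V) (n : ℕ) : Set (Submodule ℂ (Fin n → V)) :=
  {W | ∃ (k : ℕ) (K : Subgroup G) (i : Fin (k + 1) → Fin n) (g : Fin (k + 1) → G),
        StrictMono i ∧ IsClosedSubgroup ρ K ∧ (k = 0 → K ≠ ⊥) ∧ W = HKsub ρ K i g}

namespace Aux

variable (ρ : Representation ℂ G V)

lemma mem_fixedSpace {K : Subgroup G} {v : V} :
    v ∈ fixedSpace ρ K ↔ ∀ h ∈ K, ρ h v = v := Iff.rfl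

lemma rho_cancel (g : G) {x y : V} (h : ρ g x = ρ g y) : x = y := by
  have : ρ g⁻¹ (ρ g x) = ρ g⁻¹ (ρ g y) := by rw [h]
  simpa [← Module.End.mul_apply, ← map_mul] using this

lemma rho_inj (g : G) : Function.Injective (ρ g) := fun x y h => rho_cancel ρ g h

lemma fixedSpace_anti {K L : Subgroup G} (h : K ≤ L) :
    fixedSpace ρ L ≤ fixedSpace ρ K := fun v hv k hk => hv k (h hk)

/-- pointwise stabilizer of a submodule -/
def pstab (U : Submodule ℂ V) : Subgroup G where
  carrier := {g | ∀ v ∈ U, ρ g v = v}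
  one_mem' := by intro v _; simp
  mul_mem' := by
    intro a b ha hb v hv
    rw [map_mul, Module.End.mul_apply, hb v hv, ha v hv]
  inv_mem' := by
    intro a ha v hv
    have := ha v hv
    apply rho_cancel ρ a
    rw [this]
    simpa [← Module.End.mul_apply, ← map_mul] using rfl

lemma mem_pstab {U : Submodule ℂ V} {g : G} :
    g ∈ pstab ρ U ↔ ∀ v ∈ U, ρ g v = v := Iff.rfl

/-- closure of a subgroup -/
def clo (K : Subgroup G) : Subgroup G := pstab ρ (fixedSpace ρ K)

lemma le_clo (K : Subgroup G) : K ≤ clo ρ K := fun h hh v hv => hv h hh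

lemma fixedSpace_clo (K : Subgroup G) : fixedSpace ρ (clo ρ K) = fixedSpace ρ K := by
  apply le_antisymm
  · exact fixedSpace_anti ρ (le_clo ρ K)
  · intro v hv h hh
    exact hh v hv

lemma isClosed_clo (K : Subgroup G) : IsClosedSubgroup ρ (clo ρ K) := by
  intro L hle hfix
  apply le_antisymm _ hle
  intro l hl v hv
  have : v ∈ fixedSpace ρ L := by rw [hfix, fixedSpace_clo]; exact hv
  exact this l hl

lemma isClosed_iff_clo_eq {K : Subgroup G} : IsClosedSubgroup ρ K ↔ clo ρ K = K := by
  constructor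
  · intro h
    exact h (clo ρ K) (le_clo ρ K) (fixedSpace_clo ρ K)
  · intro h L hle hfix
    apply le_antisymm _ hle
    intro l hl
    rw [← h]
    intro v hv
    rw [← hfix] at hv
    exact hv l hl

lemma isClosed_bot (hfaith : Function.Injective ρ) : IsClosedSubgroup ρ (⊥ : Subgroup G) := by
  intro L _ hfix
  ext x
  simp only [Subgroup.mem_bot]
  constructor
  · intro hx
    apply hfaith
    ext v
    have : v ∈ fixedSpace ρ L := by
      rw [hfix]; intro h hh; rw [Subgroup.mem_bot] at hh; simp [hh]
    simpa using this x hx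
  · intro hx; subst hx; exact one_mem L

lemma fixedSpace_bot : fixedSpace ρ (⊥ : Subgroup G) = ⊤ := by
  ext v; simp only [Submodule.mem_top, iff_true, mem_fixedSpace]
  intro h hh; rw [Subgroup.mem_bot] at hh; simp [hh]

lemma eq_bot_of_fixedSpace_eq_top (hfaith : Function.Injective ρ) {K : Subgroup G}
    (h : fixedSpace ρ K = ⊤) : K = ⊥ := by
  ext x
  simp only [Subgroup.mem_bot]
  constructor
  · intro hx
    apply hfaith
    ext v
    have : (v : V) ∈ fixedSpace ρ K := by rw [h]; trivial
    simpa using this x hx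
  · intro hx; subst hx; exact one_mem K

lemma eq_top_of_closed_fix_bot {K : Subgroup G} (hc : IsClosedSubgroup ρ K)
    (h : fixedSpace ρ K = ⊥) : K = ⊤ := by
  refine (hc ⊤ le_top ?_).symm
  rw [h]
  apply le_antisymm _ bot_le
  rw [← h]
  exact fixedSpace_anti ρ le_top

lemma fixedSpace_sup {K L : Subgroup G} :
    fixedSpace ρ (K ⊔ L) = fixedSpace ρ K ⊓ fixedSpace ρ L := by
  apply le_antisymm
  · exact le_inf (fixedSpace_anti ρ le_sup_left) (fixedSpace_anti ρ le_sup_right)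
  · intro v hv h hh
    have hKs : K ≤ pstab ρ (fixedSpace ρ K ⊓ fixedSpace ρ L) := by
      intro k hk u hu; exact hu.1 k hk
    have hLs : L ≤ pstab ρ (fixedSpace ρ K ⊓ fixedSpace ρ L) := by
      intro k hk u hu; exact hu.2 k hk
    exact (sup_le hKs hLs) hh v hv

/-- the subgroup fixing a given vector -/
def fixer (v : V) : Subgroup G where
  carrier := {g | ρ g v = v}
  one_mem' := by simp
  mul_mem' := by
    intro a b ha hb
    simp only [Set.mem_setOf_eq] at *
    rw [map_mul, Module.End.mul_apply, hb, ha]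
  inv_mem' := by
    intro a ha
    simp only [Set.mem_setOf_eq] at *
    apply rho_cancel ρ a
    rw [ha, ← Module.End.mul_apply, ← map_mul, mul_inv_cancel, map_one, Module.End.one_apply]

lemma fixedSpace_closure_singleton {c : G} {v : V} :
    v ∈ fixedSpace ρ (Subgroup.closure {c}) ↔ ρ c v = v := by
  constructor
  · intro hv; exact hv c (Subgroup.subset_closure rfl)
  · intro hv h hh
    have : Subgroup.closure {c} ≤ fixer ρ v := by
      rw [Subgroup.closure_le]
      intro x hx; rw [Set.mem_singleton_iff] at hx; subst hx; exact hv
    exact this hh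


section HKsetSec

variable (ρ : Representation ℂ G V) {n : ℕ}

/-- Finset-indexed version of `HKsub`. -/
def HKset (K : Subgroup G) (I : Finset (Fin n)) (g : Fin n → G) :
    Submodule ℂ (Fin n → V) where
  carrier := {w | ∃ v, v ∈ fixedSpace ρ K ∧ ∀ i ∈ I, w i = ρ (g i) v}
  add_mem' := by
    rintro w₁ w₂ ⟨v₁, hv₁, h₁⟩ ⟨v₂, hv₂, h₂⟩
    exact ⟨v₁ + v₂, (fixedSpace ρ K).add_mem hv₁ hv₂, fun i hi => by
      simp only [Pi.add_apply, map_add, h₁ i hi, h₂ i hi]⟩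
  zero_mem' := ⟨0, (fixedSpace ρ K).zero_mem, fun i _ => by simp⟩
  smul_mem' := by
    rintro c w ⟨v, hv, h⟩
    exact ⟨c • v, (fixedSpace ρ K).smul_mem c hv, fun i hi => by
      simp only [Pi.smul_apply, map_smul, h i hi]⟩

lemma mem_HKset {K : Subgroup G} {I : Finset (Fin n)} {g : Fin n → G} {w : Fin n → V} :
    w ∈ HKset ρ K I g ↔ ∃ v, v ∈ fixedSpace ρ K ∧ ∀ i ∈ I, w i = ρ (g i) v := Iff.rfl

open Classical in
lemma mem_GPrime_iff {W : Submodule ℂ (Fin n → V)} :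
    W ∈ GPrime ρ n ↔ ∃ (K : Subgroup G) (I : Finset (Fin n)) (g : Fin n → G),
      I.Nonempty ∧ IsClosedSubgroup ρ K ∧ (I.card = 1 → K ≠ ⊥) ∧ W = HKset ρ K I g := by
  constructor
  · rintro ⟨k, K, i, g, hmono, hcl, hk, rfl⟩
    set g' : Fin n → G := fun x => if h : ∃ j, i j = x then g h.choose else 1 with hg'
    have hgext : ∀ j, g' (i j) = g j := by
      intro j
      have hj : ∃ j', i j' = i j := ⟨j, rfl⟩
      rw [hg']
      simp only [dif_pos hj]
      congr 1
      exact hmono.injective hj.choose_spec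
    refine ⟨K, Finset.univ.image i, g', ⟨i 0, Finset.mem_image_of_mem i (Finset.mem_univ 0)⟩,
      hcl, ?_, ?_⟩
    · intro hcard
      apply hk
      rw [Finset.card_image_of_injective _ hmono.injective, Finset.card_univ,
        Fintype.card_fin] at hcard
      omega
    · ext w
      constructor
      · rintro ⟨v, hv, hw⟩
        refine ⟨v, hv, ?_⟩
        intro x hx
        rw [Finset.mem_image] at hx
        obtain ⟨j, -, rfl⟩ := hx
        rw [hgext j]
        exact hw j
      · rintro ⟨v, hv, hw⟩
        refine ⟨v, hv, fun j => ?_⟩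
        have := hw (i j) (Finset.mem_image_of_mem i (Finset.mem_univ j))
        rwa [hgext j] at this
  · rintro ⟨K, I, g, hne, hcl, hcard, rfl⟩
    obtain ⟨k, hk⟩ : ∃ k, I.card = k + 1 := ⟨I.card - 1, by
      have := Finset.card_pos.mpr hne; omega⟩
    refine ⟨k, K, fun m => (I.orderIsoOfFin hk m : Fin n),
      fun m => g (I.orderIsoOfFin hk m : Fin n), ?_, hcl, ?_, ?_⟩
    · intro a b hab
      exact (I.orderIsoOfFin hk).strictMono hab
    · intro hk0
      apply hcard
      omega
    · ext w
      constructor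
      · rintro ⟨v, hv, hw⟩
        refine ⟨v, hv, fun m => ?_⟩
        exact hw _ (I.orderIsoOfFin hk m).2
      · rintro ⟨v, hv, hw⟩
        refine ⟨v, hv, fun x hx => ?_⟩
        have hm : ((I.orderIsoOfFin hk) ((I.orderIsoOfFin hk).symm ⟨x, hx⟩) : Fin n) = x := by
          rw [OrderIso.apply_symm_apply]
        have := hw ((I.orderIsoOfFin hk).symm ⟨x, hx⟩)
        simp only at this
        rwa [hm] at this

end HKsetSec


section NF

variable (ρ : Representation ℂ G V) {n : ℕ}

lemma rho_apply_mul (a b : G) (v : V) : ρ (a * b) v = ρ a (ρ b v) := by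
  rw [map_mul]; rfl

def blockOf (blk : Fin n → Fin n) (r : Fin n) : Finset (Fin n) :=
  Finset.univ.filter (fun i => blk i = r)

lemma mem_blockOf {blk : Fin n → Fin n} {r i : Fin n} :
    i ∈ blockOf blk r ↔ blk i = r := by simp [blockOf]

def NFsp (R : Finset (Fin n)) (blk : Fin n → Fin n) (K : Fin n → Subgroup G)
    (g : Fin n → G) : Submodule ℂ (Fin n → V) :=
  ⨅ r ∈ R, HKset ρ (K r) (blockOf blk r) g

lemma mem_NFsp {R : Finset (Fin n)} {blk : Fin n → Fin n} {K : Fin n → Subgroup G}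
    {g : Fin n → G} {w : Fin n → V} :
    w ∈ NFsp ρ R blk K g ↔ ∀ r ∈ R, ∃ v, v ∈ fixedSpace ρ (K r) ∧
      ∀ m : Fin n, blk m = r → w m = ρ (g m) v := by
  simp only [NFsp, Submodule.mem_iInf, mem_HKset, mem_blockOf]

def wdef (R : Finset (Fin n)) (blk : Fin n → Fin n) (g : Fin n → G)
    (v : Fin n → V) (u : Fin n → V) : Fin n → V :=
  fun m => if blk m ∈ R then ρ (g m) (v (blk m)) else u m

lemma wdef_mem {R : Finset (Fin n)} {blk : Fin n → Fin n} {K : Fin n → Subgroup G}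
    {g : Fin n → G} (v u : Fin n → V) (hv : ∀ r ∈ R, v r ∈ fixedSpace ρ (K r)) :
    wdef ρ R blk g v u ∈ NFsp ρ R blk K g := by
  rw [mem_NFsp]
  intro r hr
  refine ⟨v r, hv r hr, fun m hm => ?_⟩
  simp only [wdef, hm, if_pos hr]

lemma mem_fixedSpace_comap_conj {K : Subgroup G} {h : G} {v : V} :
    v ∈ fixedSpace ρ (K.comap (MulAut.conj h).toMonoidHom) ↔ ρ h v ∈ fixedSpace ρ K := by
  constructor
  · intro hv k hk
    have hmem : h⁻¹ * k * h ∈ K.comap (MulAut.conj h).toMonoidHom := by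
      simp only [Subgroup.mem_comap, MulEquiv.coe_toMonoidHom, MulAut.conj_apply]
      group
      exact hk
    have := hv _ hmem
    calc ρ k (ρ h v) = ρ (k * h) v := (rho_apply_mul ρ _ _ _).symm
    _ = ρ (h * (h⁻¹ * k * h)) v := by congr 1; group
    _ = ρ h (ρ (h⁻¹ * k * h) v) := rho_apply_mul ρ _ _ _
    _ = ρ h v := by rw [this]
  · intro hv x hx
    simp only [Subgroup.mem_comap, MulEquiv.coe_toMonoidHom, MulAut.conj_apply] at hx
    have := hv _ hx
    apply rho_cancel ρ h
    calc ρ h (ρ x v) = ρ (h * x) v := by rw [rho_apply_mul]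
    _ = ρ ((h * x * h⁻¹) * h) v := by congr 1; group
    _ = ρ (h * x * h⁻¹) (ρ h v) := by rw [rho_apply_mul]
    _ = ρ h v := this

lemma fix_update_same {K : Fin n → Subgroup G} {r : Fin n} {c : G} {v : V} :
    v ∈ fixedSpace ρ (Function.update K r (clo ρ (K r ⊔ Subgroup.closure {c})) r) ↔
      v ∈ fixedSpace ρ (K r) ∧ ρ c v = v := by
  rw [Function.update_self, fixedSpace_clo, fixedSpace_sup]
  simp only [Submodule.mem_inf]
  rw [fixedSpace_closure_singleton]

/-- merging a hyperplane whose two indices lie in the same block -/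
lemma merge_same {R : Finset (Fin n)} {blk : Fin n → Fin n} {K : Fin n → Subgroup G}
    {g : Fin n → G} (h1 : ∀ m, blk m ∈ R) (i j : Fin n) (g₀ : G)
    (hij : blk j = blk i) :
    Hsub ρ i j g₀ ⊓ NFsp ρ R blk K g =
      NFsp ρ R blk (Function.update K (blk i)
        (clo ρ (K (blk i) ⊔ Subgroup.closure {(g j)⁻¹ * g₀ * g i}))) g := by
  set c := (g j)⁻¹ * g₀ * g i with hc
  ext w
  simp only [Submodule.mem_inf, mem_NFsp]
  constructor
  · rintro ⟨hw0, hw⟩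
    intro r hr
    by_cases hri : r = blk i
    · subst hri
      obtain ⟨v, hv, hvw⟩ := hw (blk i) hr
      refine ⟨v, ?_, hvw⟩
      rw [fix_update_same]
      refine ⟨hv, ?_⟩
      apply rho_cancel ρ (g j)
      have hwi : w i = ρ (g i) v := hvw i rfl
      have hwj : w j = ρ (g j) v := hvw j hij
      have hw0' : w j = ρ g₀ (w i) := hw0
      calc ρ (g j) (ρ c v) = ρ (g j * c) v := (rho_apply_mul ρ _ _ _).symm
      _ = ρ (g₀ * g i) v := by congr 1; rw [hc]; group
      _ = ρ g₀ (ρ (g i) v) := rho_apply_mul ρ _ _ _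
      _ = ρ (g j) v := by rw [← hwi, ← hw0', hwj]
    · obtain ⟨v, hv, hvw⟩ := hw r hr
      exact ⟨v, by rwa [Function.update_of_ne hri], hvw⟩
  · intro hw
    have hkey := hw (blk i) (h1 i)
    obtain ⟨v, hv, hvw⟩ := hkey
    rw [fix_update_same] at hv
    constructor
    · show w j = ρ g₀ (w i)
      have hwi : w i = ρ (g i) v := hvw i rfl
      have hwj : w j = ρ (g j) v := hvw j hij
      calc w j = ρ (g j) v := hwj
      _ = ρ (g j) (ρ c v) := by rw [hv.2]
      _ = ρ (g j * c) v := (rho_apply_mul ρ _ _ _).symm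
      _ = ρ (g₀ * g i) v := by congr 1; rw [hc]; group
      _ = ρ g₀ (ρ (g i) v) := rho_apply_mul ρ _ _ _
      _ = ρ g₀ (w i) := by rw [hwi]
    · intro r hr
      by_cases hri : r = blk i
      · subst hri
        exact ⟨v, hv.1, hvw⟩
      · obtain ⟨v', hv', hvw'⟩ := hw r hr
        rw [Function.update_of_ne hri] at hv'
        exact ⟨v', hv', hvw'⟩

/-- merging a hyperplane whose two indices lie in different blocks -/
lemma merge_diff {R : Finset (Fin n)} {blk : Fin n → Fin n} {K : Fin n → Subgroup G}
    {g : Fin n → G} (h1 : ∀ m, blk m ∈ R) (i j : Fin n) (g₀ : G)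
    (hij : blk j ≠ blk i) :
    Hsub ρ i j g₀ ⊓ NFsp ρ R blk K g =
      NFsp ρ (R.erase (blk j)) (fun m => if blk m = blk j then blk i else blk m)
        (Function.update K (blk i) (clo ρ (K (blk i) ⊔
          (K (blk j)).comap (MulAut.conj ((g j)⁻¹ * g₀ * g i)).toMonoidHom)))
        (fun m => if blk m = blk j then g m * ((g j)⁻¹ * g₀ * g i) else g m) := by
  set h := (g j)⁻¹ * g₀ * g i with hh
  set blk' := fun m => if blk m = blk j then blk i else blk m with hblk'
  set g' := fun m => if blk m = blk j then g m * h else g m with hg'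
  have hgjh : g j * h = g₀ * g i := by rw [hh]; group
  have hfixK' : ∀ v : V, v ∈ fixedSpace ρ (Function.update K (blk i) (clo ρ (K (blk i) ⊔
      (K (blk j)).comap (MulAut.conj h).toMonoidHom)) (blk i)) ↔
      v ∈ fixedSpace ρ (K (blk i)) ∧ ρ h v ∈ fixedSpace ρ (K (blk j)) := by
    intro v
    rw [Function.update_self, fixedSpace_clo, fixedSpace_sup]
    simp only [Submodule.mem_inf]
    rw [mem_fixedSpace_comap_conj]
  ext w
  simp only [Submodule.mem_inf, mem_NFsp]
  constructor
  · rintro ⟨hw0, hw⟩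
    intro r hr
    rw [Finset.mem_erase] at hr
    by_cases hri : r = blk i
    · subst hri
      obtain ⟨v₁, hv₁, hvw₁⟩ := hw (blk i) (h1 i)
      obtain ⟨v₂, hv₂, hvw₂⟩ := hw (blk j) (h1 j)
      have hv₂eq : v₂ = ρ h v₁ := by
        apply rho_cancel ρ (g j)
        have hwj : w j = ρ (g j) v₂ := hvw₂ j rfl
        have hwi : w i = ρ (g i) v₁ := hvw₁ i rfl
        have hw0' : w j = ρ g₀ (w i) := hw0
        calc ρ (g j) v₂ = w j := hwj.symm
        _ = ρ g₀ (ρ (g i) v₁) := by rw [hw0', hwi]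
        _ = ρ (g₀ * g i) v₁ := (rho_apply_mul ρ _ _ _).symm
        _ = ρ (g j * h) v₁ := by rw [hgjh]
        _ = ρ (g j) (ρ h v₁) := rho_apply_mul ρ _ _ _
      refine ⟨v₁, ?_, ?_⟩
      · rw [hfixK']
        exact ⟨hv₁, hv₂eq ▸ hv₂⟩
      · intro m hm
        rw [hblk'] at hm
        simp only at hm
        by_cases hmj : blk m = blk j
        · rw [hg']
          simp only [hmj, if_pos]
          calc w m = ρ (g m) v₂ := hvw₂ m hmj
          _ = ρ (g m) (ρ h v₁) := by rw [hv₂eq]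
          _ = ρ (g m * h) v₁ := (rho_apply_mul ρ _ _ _).symm
        · rw [if_neg hmj] at hm
          rw [hg']
          simp only [hmj, if_neg, if_false]
          exact hvw₁ m hm
    · obtain ⟨v, hv, hvw⟩ := hw r hr.2
      refine ⟨v, by rwa [Function.update_of_ne hri], ?_⟩
      intro m hm
      rw [hblk'] at hm
      simp only at hm
      by_cases hmj : blk m = blk j
      · rw [if_pos hmj] at hm
        exact absurd hm.symm hri
      · rw [if_neg hmj] at hm
        rw [hg']
        simp only [hmj, if_neg, if_false]
        exact hvw m hm
  · intro hw
    have hiR' : blk i ∈ R.erase (blk j) := Finset.mem_erase.mpr ⟨Ne.symm hij, h1 i⟩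
    obtain ⟨v, hv, hvw⟩ := hw (blk i) hiR'
    rw [hfixK'] at hv
    have hwblkj : ∀ m : Fin n, blk m = blk j → w m = ρ (g m) (ρ h v) := by
      intro m hm
      have hm' : blk' m = blk i := by rw [hblk']; simp only [hm, if_pos]
      have := hvw m hm'
      rw [hg'] at this
      simp only [hm, if_pos] at this
      rw [this, rho_apply_mul]
    have hwblki : ∀ m : Fin n, blk m = blk i → w m = ρ (g m) v := by
      intro m hm
      have hmj : ¬ (blk m = blk j) := by rw [hm]; exact fun hcon => hij hcon.symm
      have hm' : blk' m = blk i := by rw [hblk']; simp only [hmj, if_neg, if_false]; exact hm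
      have := hvw m hm'
      rw [hg'] at this
      simp only [hmj, if_neg, if_false] at this
      exact this
    constructor
    · show w j = ρ g₀ (w i)
      calc w j = ρ (g j) (ρ h v) := hwblkj j rfl
      _ = ρ (g j * h) v := (rho_apply_mul ρ _ _ _).symm
      _ = ρ (g₀ * g i) v := by rw [hgjh]
      _ = ρ g₀ (ρ (g i) v) := rho_apply_mul ρ _ _ _
      _ = ρ g₀ (w i) := by rw [← hwblki i rfl]
    · intro r hr
      by_cases hrj : r = blk j
      · subst hrj
        exact ⟨ρ h v, hv.2, hwblkj⟩
      · by_cases hri : r = blk i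
        · subst hri
          exact ⟨v, hv.1, hwblki⟩
        · obtain ⟨v', hv', hvw'⟩ := hw r (Finset.mem_erase.mpr ⟨hrj, hr⟩)
          rw [Function.update_of_ne hri] at hv'
          refine ⟨v', hv', ?_⟩
          intro m hm
          have hmj : ¬ (blk m = blk j) := fun hcon => by
            rw [hblk'] at hvw'
            exact hrj (by rw [← hm, hcon])
          have hm' : blk' m = r := by rw [hblk']; simp only [hmj, if_neg, if_false]; exact hm
          have := hvw' m hm'
          rw [hg'] at this
          simp only [hmj, if_neg, if_false] at this
          exact this

end NF


section Exists

variable (ρ : Representation ℂ G V) {n : ℕ}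

lemma NFsp_base : NFsp ρ (Finset.univ : Finset (Fin n)) id (fun _ => (⊥ : Subgroup G))
    (fun _ => (1 : G)) = ⊤ := by
  rw [eq_top_iff]
  intro w _
  rw [mem_NFsp]
  intro r _
  refine ⟨w r, by rw [fixedSpace_bot]; trivial, fun m hm => ?_⟩
  have : m = r := hm
  subst this
  simp

lemma exists_preNF (hfaith : Function.Injective ρ) (S : Finset (Submodule ℂ (Fin n → V)))
    (hS : ↑S ⊆ DowlingArrangement ρ n) :
    ∃ (R : Finset (Fin n)) (blk : Fin n → Fin n) (K : Fin n → Subgroup G) (g : Fin n → G),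
      (∀ m, blk m ∈ R) ∧ (∀ r ∈ R, blk r = r) ∧ (∀ r ∈ R, IsClosedSubgroup ρ (K r)) ∧
      NFsp ρ R blk K g = S.inf id := by
  classical
  induction S using Finset.induction_on with
  | empty =>
      refine ⟨Finset.univ, id, fun _ => ⊥, fun _ => 1, fun m => Finset.mem_univ _,
        fun r _ => rfl, fun r _ => isClosed_bot ρ hfaith, ?_⟩
      rw [Finset.inf_empty, NFsp_base]
  | @insert W S hWS ih =>
      have hSsub : ↑S ⊆ DowlingArrangement ρ n := by
        intro x hx
        exact hS (by simp [hx])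
      obtain ⟨R, blk, K, g, h1, h2, hcl, hsp⟩ := ih hSsub
      have hW : W ∈ DowlingArrangement ρ n := hS (by simp)
      have hW' : ∃ (i j : Fin n) (g₀ : G), W = Hsub ρ i j g₀ := by
        rcases hW with ⟨i, j, g₀, _, hw⟩ | ⟨i, g₀, _, hw⟩
        · exact ⟨i, j, g₀, hw⟩
        · exact ⟨i, i, g₀, hw⟩
      obtain ⟨i, j, g₀, rfl⟩ := hW'
      have hinf : (insert (Hsub ρ i j g₀) S).inf id = Hsub ρ i j g₀ ⊓ S.inf id := by
        rw [Finset.inf_insert]; rfl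
      by_cases hij : blk j = blk i
      · refine ⟨R, blk, Function.update K (blk i)
          (clo ρ (K (blk i) ⊔ Subgroup.closure {(g j)⁻¹ * g₀ * g i})), g, h1, h2, ?_, ?_⟩
        · intro r hr
          by_cases hri : r = blk i
          · subst hri; rw [Function.update_self]; exact isClosed_clo ρ _
          · rw [Function.update_of_ne hri]; exact hcl r hr
        · rw [hinf, ← hsp, merge_same ρ h1 i j g₀ hij]
      · refine ⟨R.erase (blk j), (fun m => if blk m = blk j then blk i else blk m),
          Function.update K (blk i) (clo ρ (K (blk i) ⊔
            (K (blk j)).comap (MulAut.conj ((g j)⁻¹ * g₀ * g i)).toMonoidHom)),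
          (fun m => if blk m = blk j then g m * ((g j)⁻¹ * g₀ * g i) else g m),
          ?_, ?_, ?_, ?_⟩
        · intro m
          by_cases hmj : blk m = blk j
          · simp only [hmj, if_pos]
            exact Finset.mem_erase.mpr ⟨Ne.symm hij, h1 i⟩
          · simp only [if_neg hmj]
            exact Finset.mem_erase.mpr ⟨hmj, h1 m⟩
        · intro r hr
          rw [Finset.mem_erase] at hr
          have hbr : blk r = r := h2 r hr.2
          have hrj : ¬ blk r = blk j := by rw [hbr]; exact hr.1
          simp only [if_neg hrj]
          exact hbr
        · intro r hr
          by_cases hri : r = blk i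
          · subst hri; rw [Function.update_self]; exact isClosed_clo ρ _
          · rw [Function.update_of_ne hri]
            exact hcl r (Finset.mem_of_mem_erase hr)
        · rw [hinf, ← hsp, merge_diff ρ h1 i j g₀ hij]

end Exists


section Good

variable (ρ : Representation ℂ G V) {n : ℕ}

def GoodNF (R : Finset (Fin n)) (blk : Fin n → Fin n) (K : Fin n → Subgroup G) : Prop :=
  (∀ r ∈ R, blk r = r) ∧
  (∀ r ∈ R, IsClosedSubgroup ρ (K r)) ∧
  (∀ r ∈ R, (blockOf blk r).card = 1 → K r ≠ ⊥) ∧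
  (∀ r ∈ R, ∀ r' ∈ R, fixedSpace ρ (K r) = ⊥ → fixedSpace ρ (K r') = ⊥ → r = r')

lemma NFsp_mono_set {R R' : Finset (Fin n)} {blk : Fin n → Fin n} {K : Fin n → Subgroup G}
    {g : Fin n → G} (hsub : R' ⊆ R) : NFsp ρ R blk K g ≤ NFsp ρ R' blk K g := by
  intro w hw
  rw [mem_NFsp] at hw ⊢
  exact fun r hr => hw r (hsub hr)

open Classical in
lemma mergeZeros {R : Finset (Fin n)} {blk : Fin n → Fin n} {K : Fin n → Subgroup G}
    {g : Fin n → G} (h1 : ∀ m, blk m ∈ R) (h2 : ∀ r ∈ R, blk r = r)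
    (hcl : ∀ r ∈ R, IsClosedSubgroup ρ (K r)) :
    ∃ (R' : Finset (Fin n)) (blk' : Fin n → Fin n),
      R' ⊆ R ∧ (∀ r ∈ R', blk' r = r) ∧
      (∀ r ∈ R', ∀ r' ∈ R', fixedSpace ρ (K r) = ⊥ → fixedSpace ρ (K r') = ⊥ → r = r') ∧
      NFsp ρ R' blk' K g = NFsp ρ R blk K g := by
  by_cases hz : ∃ r₀ ∈ R, fixedSpace ρ (K r₀) = ⊥
  · obtain ⟨r₀, hr₀R, hr₀fix⟩ := hz
    set blk' : Fin n → Fin n := fun m => if fixedSpace ρ (K (blk m)) = ⊥ then r₀ else blk m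
      with hblk'
    set R' : Finset (Fin n) := insert r₀ (R.filter (fun r => ¬ fixedSpace ρ (K r) = ⊥))
      with hR'
    have hr₀R' : r₀ ∈ R' := Finset.mem_insert_self _ _
    have hiff : ∀ m : Fin n, (blk' m = r₀ ↔ fixedSpace ρ (K (blk m)) = ⊥) := by
      intro m
      constructor
      · intro hm
        by_contra hcon
        rw [hblk'] at hm
        simp only [if_neg hcon] at hm
        exact hcon (by rw [hm]; exact hr₀fix)
      · intro hm
        rw [hblk']
        simp only [if_pos hm]
    have hiff2 : ∀ (r : Fin n), fixedSpace ρ (K r) ≠ ⊥ → ∀ m : Fin n,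
        (blk' m = r ↔ blk m = r) := by
      intro r hrfix m
      constructor
      · intro hm
        by_cases hcon : fixedSpace ρ (K (blk m)) = ⊥
        · exfalso
          rw [hblk'] at hm
          simp only [if_pos hcon] at hm
          exact hrfix (by rw [← hm]; exact hr₀fix)
        · rw [hblk'] at hm
          simpa only [if_neg hcon] using hm
      · intro hm
        have : ¬ fixedSpace ρ (K (blk m)) = ⊥ := by rw [hm]; exact hrfix
        rw [hblk']
        simp only [if_neg this]
        exact hm
    refine ⟨R', blk', ?_, ?_, ?_, ?_⟩
    · intro r hr
      rcases Finset.mem_insert.mp hr with h | h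
      · rw [h]; exact hr₀R
      · exact Finset.mem_of_mem_filter r h
    · intro r hr
      rcases Finset.mem_insert.mp hr with h | h
      · rw [h, hblk']
        simp only [h2 r₀ hr₀R, if_pos hr₀fix]
      · rw [Finset.mem_filter] at h
        have hb : blk r = r := h2 r h.1
        rw [hblk']
        have : ¬ fixedSpace ρ (K (blk r)) = ⊥ := by rw [hb]; exact h.2
        simp only [if_neg this]
        exact hb
    · intro r hr r' hr' hfr hfr'
      have e1 : r = r₀ := by
        rcases Finset.mem_insert.mp hr with h | h
        · exact h
        · exact absurd hfr (Finset.mem_filter.mp h).2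
      have e2 : r' = r₀ := by
        rcases Finset.mem_insert.mp hr' with h | h
        · exact h
        · exact absurd hfr' (Finset.mem_filter.mp h).2
      rw [e1, e2]
    · ext w
      rw [mem_NFsp, mem_NFsp]
      constructor
      · intro hw r hr
        by_cases hfr : fixedSpace ρ (K r) = ⊥
        · obtain ⟨v₀, hv₀, hw₀⟩ := hw r₀ hr₀R'
          rw [hr₀fix, Submodule.mem_bot] at hv₀
          subst hv₀
          refine ⟨0, (fixedSpace ρ (K r)).zero_mem, fun m hm => ?_⟩
          exact hw₀ m ((hiff m).mpr (by rw [hm]; exact hfr))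
        · have hrR' : r ∈ R' := Finset.mem_insert_of_mem (Finset.mem_filter.mpr ⟨hr, hfr⟩)
          obtain ⟨v, hv, hw'⟩ := hw r hrR'
          exact ⟨v, hv, fun m hm => hw' m ((hiff2 r hfr m).mpr hm)⟩
      · intro hw r hr
        rcases Finset.mem_insert.mp hr with h | h
        · subst h
          refine ⟨0, (fixedSpace ρ (K _)).zero_mem, fun m hm => ?_⟩
          have hfm : fixedSpace ρ (K (blk m)) = ⊥ := (hiff m).mp hm
          obtain ⟨v', hv', hw'⟩ := hw (blk m) (h1 m)
          rw [hfm, Submodule.mem_bot] at hv'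
          subst hv'
          exact hw' m rfl
        · rw [Finset.mem_filter] at h
          obtain ⟨v, hv, hw'⟩ := hw r h.1
          exact ⟨v, hv, fun m hm => hw' m ((hiff2 r h.2 m).mp hm)⟩
  · push_neg at hz
    exact ⟨R, blk, le_refl R, h2, fun r hr r' hr' hfr _ => absurd hfr (hz r hr), rfl⟩

open Classical in
lemma dropTrivial {R : Finset (Fin n)} {blk : Fin n → Fin n} {K : Fin n → Subgroup G}
    {g : Fin n → G} (h2 : ∀ r ∈ R, blk r = r) :
    ∃ R' : Finset (Fin n), R' ⊆ R ∧
      (∀ r ∈ R', (blockOf blk r).card = 1 → K r ≠ ⊥) ∧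
      NFsp ρ R' blk K g = NFsp ρ R blk K g := by
  set R' : Finset (Fin n) := R.filter (fun r => K r ≠ ⊥ ∨ 2 ≤ (blockOf blk r).card) with hR'
  refine ⟨R', Finset.filter_subset _ _, ?_, ?_⟩
  · intro r hr hcard
    rcases (Finset.mem_filter.mp hr).2 with h | h
    · exact h
    · omega
  · apply le_antisymm _ (NFsp_mono_set ρ (Finset.filter_subset _ _))
    intro w hw
    rw [mem_NFsp] at hw ⊢
    intro r hr
    by_cases hr' : r ∈ R'
    · exact hw r hr'
    · rw [hR', Finset.mem_filter] at hr'
      push_neg at hr'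
      obtain ⟨hKbot, hcard⟩ := hr' hr
      refine ⟨ρ ((g r)⁻¹) (w r), by rw [hKbot, fixedSpace_bot]; trivial, fun m hm => ?_⟩
      have hmr : m = r := by
        have hmb : m ∈ blockOf blk r := mem_blockOf.mpr hm
        have hrb : r ∈ blockOf blk r := mem_blockOf.mpr (h2 r hr)
        exact Finset.card_le_one.mp (by omega) m hmb r hrb
      subst hmr
      rw [← rho_apply_mul, mul_inv_cancel, map_one]
      rfl

lemma exists_goodNF (hfaith : Function.Injective ρ)
    (S : Finset (Submodule ℂ (Fin n → V))) (hS : ↑S ⊆ DowlingArrangement ρ n) :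
    ∃ (R : Finset (Fin n)) (blk : Fin n → Fin n) (K : Fin n → Subgroup G) (g : Fin n → G),
      GoodNF ρ R blk K ∧ NFsp ρ R blk K g = S.inf id := by
  obtain ⟨R, blk, K, g, h1, h2, hcl, hsp⟩ := exists_preNF ρ hfaith S hS
  obtain ⟨R', blk', hsub, h2', hzu, hsp'⟩ := mergeZeros ρ h1 h2 hcl
  obtain ⟨R'', hsub'', hsing, hsp''⟩ := dropTrivial ρ (K := K) (g := g) h2'
  refine ⟨R'', blk', K, g, ⟨fun r hr => h2' r (hsub'' hr),
    fun r hr => hcl r (hsub (hsub'' hr)), hsing,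
    fun r hr r' hr' => hzu r (hsub'' hr) r' (hsub'' hr')⟩, ?_⟩
  rw [hsp'', hsp', hsp]

end Good


section PartB

variable (ρ : Representation ℂ G V) {n : ℕ}
variable {R : Finset (Fin n)} {blk : Fin n → Fin n} {K : Fin n → Subgroup G} {g : Fin n → G}

lemma exists_ne_one_of_ne_bot {K' : Subgroup G} (h : K' ≠ ⊥) : ∃ x ∈ K', x ≠ 1 := by
  by_contra hcc
  push_neg at hcc
  exact h ((Subgroup.eq_bot_iff_forall K').mpr hcc)

lemma exists_not_fixed (hfaith : Function.Injective ρ) {K' : Subgroup G} (hK' : K' ≠ ⊥) :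
    ∃ v : V, v ∉ fixedSpace ρ K' := by
  obtain ⟨h₀, hh₀, hh₀ne⟩ := exists_ne_one_of_ne_bot hK'
  obtain ⟨v₀, hv₀⟩ : ∃ v₀ : V, ρ h₀ v₀ ≠ v₀ := by
    by_contra hcc
    push_neg at hcc
    apply hh₀ne
    apply hfaith
    rw [map_one]
    exact LinearMap.ext hcc
  exact ⟨v₀, fun hcon => hv₀ (hcon h₀ hh₀)⟩

lemma claim1 (hV : Nontrivial V) (hfaith : Function.Injective ρ) (hg : GoodNF ρ R blk K)
    {K' : Subgroup G} {I' : Finset (Fin n)} {g' : Fin n → G}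
    (hne : I'.Nonempty) (hcard : I'.card = 1 → K' ≠ ⊥)
    (hle : NFsp ρ R blk K g ≤ HKset ρ K' I' g') :
    ∃ r ∈ R, HKset ρ (K r) (blockOf blk r) g ≤ HKset ρ K' I' g' := by
  classical
  obtain ⟨h2, hcl, hsing, hzu⟩ := hg
  have step0 : ∀ i ∈ I', blk i ∈ R := by
    intro i₁ hi₁
    by_contra hcon
    by_cases hc1 : I'.card = 1
    · have hK'bot := hcard hc1
      obtain ⟨v₀, hv₀⟩ := exists_not_fixed ρ hfaith hK'bot
      have hw : wdef ρ R blk g (fun _ => 0) (fun _ => ρ (g' i₁) v₀) ∈ NFsp ρ R blk K g :=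
        wdef_mem ρ _ _ (fun r hr => (fixedSpace ρ (K r)).zero_mem)
      obtain ⟨v', hv', hw'⟩ := hle hw
      have heq := hw' i₁ hi₁
      rw [wdef] at heq
      simp only [if_neg hcon] at heq
      have : v₀ = v' := rho_cancel ρ (g' i₁) heq
      exact hv₀ (this ▸ hv')
    · have hc2 : 1 < I'.card := by
        have := Finset.card_pos.mpr hne; omega
      obtain ⟨i₂, hi₂, hi₂ne⟩ := Finset.exists_mem_ne hc2 i₁
      obtain ⟨u₀, hu₀⟩ := exists_ne (0 : V)
      have hw : wdef ρ R blk g (fun _ => 0) (fun m => if m = i₁ then u₀ else 0)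
          ∈ NFsp ρ R blk K g :=
        wdef_mem ρ _ _ (fun r hr => (fixedSpace ρ (K r)).zero_mem)
      obtain ⟨v', hv', hw'⟩ := hle hw
      have heq2 := hw' i₂ hi₂
      have hw2 : wdef ρ R blk g (fun _ => 0) (fun m => if m = i₁ then u₀ else 0) i₂ = 0 := by
        rw [wdef]
        by_cases hbr : blk i₂ ∈ R
        · simp only [if_pos hbr, map_zero]
        · simp only [if_neg hbr, if_neg hi₂ne]
      rw [hw2] at heq2
      have hv'0 : v' = 0 := by
        apply rho_cancel ρ (g' i₂)
        rw [← heq2, map_zero]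
      have heq1 := hw' i₁ hi₁
      rw [wdef] at heq1
      simp only [if_neg hcon, if_pos rfl] at heq1
      rw [hv'0, map_zero] at heq1
      exact hu₀ heq1
  have step1 : ∀ i₁ ∈ I', ∀ i₂ ∈ I', fixedSpace ρ (K (blk i₁)) ≠ ⊥ → blk i₁ = blk i₂ := by
    intro i₁ hi₁ i₂ hi₂ hfix
    by_contra hcon
    obtain ⟨v₀, hv₀mem, hv₀ne⟩ := (Submodule.ne_bot_iff _).mp hfix
    have hvmem : ∀ r ∈ R, (fun r' => if r' = blk i₁ then v₀ else 0) r ∈ fixedSpace ρ (K r) := by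
      intro r hr
      by_cases hrb : r = blk i₁
      · simp only [if_pos hrb]; rw [hrb]; exact hv₀mem
      · simp only [if_neg hrb]; exact (fixedSpace ρ (K r)).zero_mem
    have hw : wdef ρ R blk g (fun r' => if r' = blk i₁ then v₀ else 0) 0 ∈ NFsp ρ R blk K g :=
      wdef_mem ρ _ _ hvmem
    obtain ⟨v', hv', hw'⟩ := hle hw
    have heq2 := hw' i₂ hi₂
    have hz2 : wdef ρ R blk g (fun r' => if r' = blk i₁ then v₀ else 0) 0 i₂ = 0 := by
      rw [wdef]
      simp only [if_pos (step0 i₂ hi₂)]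
      have : ¬ (blk i₂ = blk i₁) := fun hcc => hcon hcc.symm
      simp only [if_neg this, map_zero]
    rw [hz2] at heq2
    have hv'0 : v' = 0 := by
      apply rho_cancel ρ (g' i₂)
      rw [← heq2, map_zero]
    have heq1 := hw' i₁ hi₁
    have hz1 : wdef ρ R blk g (fun r' => if r' = blk i₁ then v₀ else 0) 0 i₁ = ρ (g i₁) v₀ := by
      rw [wdef]
      simp only [if_pos (step0 i₁ hi₁), if_pos rfl, if_true]
    rw [hz1, hv'0, map_zero] at heq1
    exact hv₀ne (rho_cancel ρ (g i₁) (by rw [heq1, map_zero]))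
  obtain ⟨i₀, hi₀⟩ := hne
  have hall : ∀ i ∈ I', blk i = blk i₀ := by
    intro i hi
    by_cases hf : fixedSpace ρ (K (blk i₀)) = ⊥
    · by_cases hf2 : fixedSpace ρ (K (blk i)) = ⊥
      · exact hzu (blk i) (step0 i hi) (blk i₀) (step0 i₀ hi₀) hf2 hf
      · exact step1 i hi i₀ hi₀ hf2
    · exact (step1 i₀ hi₀ i hi hf).symm
  have key : ∀ v ∈ fixedSpace ρ (K (blk i₀)),
      ρ ((g' i₀)⁻¹ * g i₀) v ∈ fixedSpace ρ K' ∧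
      ∀ i ∈ I', ρ (g' i) (ρ ((g' i₀)⁻¹ * g i₀) v) = ρ (g i) v := by
    intro v hv
    set h := (g' i₀)⁻¹ * g i₀ with hh
    have hgh : g' i₀ * h = g i₀ := by rw [hh]; group
    have hvmem : ∀ r ∈ R, (fun r' => if r' = blk i₀ then v else 0) r ∈ fixedSpace ρ (K r) := by
      intro r hr
      by_cases hrb : r = blk i₀
      · simp only [if_pos hrb]; rw [hrb]; exact hv
      · simp only [if_neg hrb]; exact (fixedSpace ρ (K r)).zero_mem
    have hw : wdef ρ R blk g (fun r' => if r' = blk i₀ then v else 0) 0 ∈ NFsp ρ R blk K g :=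
      wdef_mem ρ _ _ hvmem
    obtain ⟨v', hv', hw'⟩ := hle hw
    have hwi : ∀ i ∈ I', wdef ρ R blk g (fun r' => if r' = blk i₀ then v else 0) 0 i
        = ρ (g i) v := by
      intro i hi
      rw [wdef]
      simp only [if_pos (step0 i hi), if_pos (hall i hi)]
    have hv'eq : v' = ρ h v := by
      apply rho_cancel ρ (g' i₀)
      rw [← hw' i₀ hi₀, hwi i₀ hi₀, ← rho_apply_mul, hgh]
    constructor
    · rw [← hv'eq]; exact hv'
    · intro i hi
      rw [← hv'eq, ← hw' i hi, hwi i hi]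
  refine ⟨blk i₀, step0 i₀ hi₀, ?_⟩
  rintro w ⟨v, hv, hwv⟩
  refine ⟨ρ ((g' i₀)⁻¹ * g i₀) v, (key v hv).1, fun i hi => ?_⟩
  rw [((key v hv).2 i hi), ← hwv i (mem_blockOf.mpr (hall i hi))]

lemma block_le_block (hV : Nontrivial V) (hfaith : Function.Injective ρ)
    (hg : GoodNF ρ R blk K) {r r' : Fin n} (hr : r ∈ R) (hr' : r' ∈ R)
    (hle : HKset ρ (K r') (blockOf blk r') g ≤ HKset ρ (K r) (blockOf blk r) g) : r' = r := by
  classical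
  obtain ⟨h2, hcl, hsing, hzu⟩ := hg
  by_contra hne
  by_cases hfix : fixedSpace ρ (K r) = ⊤
  · have hKbot : K r = ⊥ := eq_bot_of_fixedSpace_eq_top ρ hfaith hfix
    have hcard : 1 < (blockOf blk r).card := by
      have h1 : r ∈ blockOf blk r := mem_blockOf.mpr (h2 r hr)
      have hne1 : (blockOf blk r).card ≠ 1 := fun hcc => hsing r hr hcc hKbot
      have := Finset.card_pos.mpr ⟨r, h1⟩
      omega
    obtain ⟨i₂, hi₂, hi₂ne⟩ := Finset.exists_mem_ne hcard r
    obtain ⟨v₀, hv₀⟩ := exists_ne (0 : V)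
    have hwmem : (fun m => if m = r then ρ (g r) v₀ else 0)
        ∈ HKset ρ (K r') (blockOf blk r') g := by
      refine ⟨0, (fixedSpace ρ (K r')).zero_mem, fun m hm => ?_⟩
      rw [mem_blockOf] at hm
      have hmr : ¬ (m = r) := fun hcc => hne (by rw [← hm, hcc, h2 r hr])
      simp only [if_neg hmr, map_zero]
    obtain ⟨v, hv, hwv⟩ := hle hwmem
    have h₂' := hwv i₂ hi₂
    simp only [if_neg hi₂ne] at h₂'
    have hv0 : v = 0 := rho_cancel ρ (g i₂) (by rw [← h₂', map_zero])
    have h₁' := hwv r (mem_blockOf.mpr (h2 r hr))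
    simp only [if_pos rfl, if_true, hv0, map_zero] at h₁'
    exact hv₀ (rho_cancel ρ (g r) (by rw [h₁', map_zero]))
  · obtain ⟨v₀, hv₀⟩ : ∃ v₀ : V, v₀ ∉ fixedSpace ρ (K r) := by
      by_contra hcc
      push_neg at hcc
      exact hfix (Submodule.eq_top_iff'.mpr hcc)
    have hwmem : (fun m => if blk m = r then ρ (g m) v₀ else 0)
        ∈ HKset ρ (K r') (blockOf blk r') g := by
      refine ⟨0, (fixedSpace ρ (K r')).zero_mem, fun m hm => ?_⟩
      rw [mem_blockOf] at hm
      have hmr : ¬ (blk m = r) := by rw [hm]; exact Ne.symm (fun hcc => hne hcc.symm)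
      simp only [if_neg hmr, map_zero]
    obtain ⟨v, hv, hwv⟩ := hle hwmem
    have h₁' := hwv r (mem_blockOf.mpr (h2 r hr))
    simp only [if_pos (h2 r hr)] at h₁'
    have : v₀ = v := rho_cancel ρ (g r) h₁'
    exact hv₀ (this ▸ hv)

end PartB


section PartC

variable (ρ : Representation ℂ G V) {n : ℕ}
variable {blk : Fin n → Fin n} {K : Fin n → Subgroup G} {g : Fin n → G}

lemma sup_block_eq_top (T : Finset (Fin n)) {s : Fin n} (hs : s ∉ T) :
    NFsp ρ T blk K g ⊔ HKset ρ (K s) (blockOf blk s) g = ⊤ := by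
  classical
  rw [eq_top_iff]
  intro w _
  rw [Submodule.mem_sup]
  refine ⟨(fun m => if blk m ∈ T then 0 else w m), ?_,
    (fun m => if blk m ∈ T then w m else 0), ?_, ?_⟩
  · rw [mem_NFsp]
    intro r hr
    refine ⟨0, (fixedSpace ρ (K r)).zero_mem, fun m hm => ?_⟩
    have : blk m ∈ T := by rw [hm]; exact hr
    simp only [if_pos this, map_zero]
  · refine ⟨0, (fixedSpace ρ (K s)).zero_mem, fun m hm => ?_⟩
    rw [mem_blockOf] at hm
    have : ¬ (blk m ∈ T) := by rw [hm]; exact hs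
    simp only [if_neg this, map_zero]
  · funext m
    by_cases hm : blk m ∈ T
    · simp only [Pi.add_apply, if_pos hm, zero_add]
    · simp only [Pi.add_apply, if_neg hm, add_zero]

lemma dim_NFsp [FiniteDimensional ℂ V] (T : Finset (Fin n)) :
    Module.finrank ℂ (NFsp ρ T blk K g) +
      ∑ r ∈ T, (Module.finrank ℂ (Fin n → V) -
        Module.finrank ℂ (HKset ρ (K r) (blockOf blk r) g)) =
      Module.finrank ℂ (Fin n → V) := by
  classical
  induction T using Finset.induction_on with
  | empty =>
      rw [Finset.sum_empty, add_zero]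
      have : NFsp ρ (∅ : Finset (Fin n)) blk K g = ⊤ := by
        rw [NFsp]
        simp
      rw [this, finrank_top]
  | @insert s T hsT ih =>
      have hins : NFsp ρ (insert s T) blk K g =
          NFsp ρ T blk K g ⊓ HKset ρ (K s) (blockOf blk s) g := by
        rw [NFsp, NFsp, Finset.iInf_insert, inf_comm]
      have hsup := sup_block_eq_top ρ (blk := blk) (K := K) (g := g) T hsT
      have hdim := Submodule.finrank_sup_add_finrank_inf_eq (NFsp ρ T blk K g)
        (HKset ρ (K s) (blockOf blk s) g)
      rw [hsup, finrank_top] at hdim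
      rw [Finset.sum_insert hsT, hins]
      have hle1 : Module.finrank ℂ (HKset ρ (K s) (blockOf blk s) g) ≤
          Module.finrank ℂ (Fin n → V) := Submodule.finrank_le _
      omega

end PartC

end Aux


/-!
STATEMENT 9: If A ⊆ V^n is an intersection of a nonempty family of members of the
generalized Dowling arrangement 𝓗(n,G,V), then A equals the intersection of the
minimal elements of 𝒢′ containing A, and this intersection is transversal: the
codimension of A equals the sum of the codimensions of these minimal elements.
-/
theorem eq_inf_minimal_GPrime_and_transversal
    [Fintype G] [FiniteDimensional ℂ V] (ρ : Representation ℂ G V)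
    (hfaith : Function.Injective ρ) (hfix : fixedSpace ρ ⊤ = ⊥)
    (n : ℕ) (A : Submodule ℂ (Fin n → V))
    (S : Set (Submodule ℂ (Fin n → V))) (hS : S ⊆ DowlingArrangement ρ n)
    (hSne : S.Nonempty) (hA : A = sInf S) :
    A = sInf {W | W ∈ GPrime ρ n ∧ A ≤ W ∧
          ∀ W' ∈ GPrime ρ n, A ≤ W' → W' ≤ W → W' = W} ∧
    Module.finrank ℂ (Fin n → V) - Module.finrank ℂ A =
      ∑ᶠ W ∈ {W | W ∈ GPrime ρ n ∧ A ≤ W ∧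
          ∀ W' ∈ GPrime ρ n, A ≤ W' → W' ≤ W → W' = W},
        (Module.finrank ℂ (Fin n → V) - Module.finrank ℂ W) := by
  classical
  by_cases hVs : Subsingleton V
  · haveI := hVs
    haveI hps : Subsingleton (Fin n → V) := inferInstance
    haveI : Subsingleton (Submodule ℂ (Fin n → V)) := (Submodule.subsingleton_iff ℂ).mpr hps
    constructor
    · exact Subsingleton.elim _ _
    · have h0 : Module.finrank ℂ (Fin n → V) = 0 := Module.finrank_zero_of_subsingleton
      rw [h0]
      simp only [Nat.zero_sub]
      rw [finsum_mem_zero]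
  · haveI hVnt : Nontrivial V := not_subsingleton_iff_nontrivial.mp hVs
    have hDfin : (DowlingArrangement ρ n).Finite := by
      apply Set.Finite.subset
        (Set.finite_range (fun p : Fin n × Fin n × G => Hsub ρ p.1 p.2.1 p.2.2))
      rintro W (⟨i, j, g₀, _, rfl⟩ | ⟨i, g₀, _, rfl⟩)
      · exact ⟨(i, j, g₀), rfl⟩
      · exact ⟨(i, i, g₀), rfl⟩
    have hSfin : S.Finite := hDfin.subset hS
    have hsinf : hSfin.toFinset.inf id = sInf S := by
      rw [Finset.inf_id_eq_sInf, hSfin.coe_toFinset]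
    obtain ⟨R, blk, K, g, hgood, hsp⟩ := Aux.exists_goodNF ρ hfaith hSfin.toFinset
      (by rw [hSfin.coe_toFinset]; exact hS)
    have hAN : A = Aux.NFsp ρ R blk K g := by rw [hA, ← hsinf, hsp]
    have hblockG : ∀ r ∈ R, Aux.HKset ρ (K r) (Aux.blockOf blk r) g ∈ GPrime ρ n := by
      intro r hr
      rw [Aux.mem_GPrime_iff]
      exact ⟨K r, Aux.blockOf blk r, g, ⟨r, Aux.mem_blockOf.mpr (hgood.1 r hr)⟩,
        hgood.2.1 r hr, hgood.2.2.1 r hr, rfl⟩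
    have hAleW : ∀ r ∈ R, A ≤ Aux.HKset ρ (K r) (Aux.blockOf blk r) g := by
      intro r hr
      rw [hAN, Aux.NFsp]
      exact iInf₂_le r hr
    have hMeq : {W | W ∈ GPrime ρ n ∧ A ≤ W ∧ ∀ W' ∈ GPrime ρ n, A ≤ W' → W' ≤ W → W' = W}
        = ↑(R.image (fun r => Aux.HKset ρ (K r) (Aux.blockOf blk r) g)) := by
      ext W
      simp only [Set.mem_setOf_eq, Finset.coe_image, Set.mem_image, Finset.mem_coe]
      constructor
      · rintro ⟨hWG, hAW, hmin⟩
        obtain ⟨K', I', g', hne', hcl', hcard', rfl⟩ := (Aux.mem_GPrime_iff ρ).mp hWG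
        obtain ⟨r, hrR, hrle⟩ := Aux.claim1 ρ hVnt hfaith hgood hne' hcard' (hAN ▸ hAW)
        exact ⟨r, hrR, hmin _ (hblockG r hrR) (hAleW r hrR) hrle⟩
      · rintro ⟨r, hrR, rfl⟩
        refine ⟨hblockG r hrR, hAleW r hrR, ?_⟩
        intro W' hW'G hAW' hW'le
        obtain ⟨K', I', g', hne', hcl', hcard', rfl⟩ := (Aux.mem_GPrime_iff ρ).mp hW'G
        obtain ⟨r', hr'R, hr'le⟩ := Aux.claim1 ρ hVnt hfaith hgood hne' hcard' (hAN ▸ hAW')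
        have hrr : r' = r := Aux.block_le_block ρ hVnt hfaith hgood hrR hr'R
          (le_trans hr'le hW'le)
        exact le_antisymm hW'le (hrr ▸ hr'le)
    rw [hMeq]
    have hinj : ∀ x ∈ R, ∀ y ∈ R,
        (fun r => Aux.HKset ρ (K r) (Aux.blockOf blk r) g) x =
        (fun r => Aux.HKset ρ (K r) (Aux.blockOf blk r) g) y → x = y := by
      intro x hx y hy hxy
      exact Aux.block_le_block ρ hVnt hfaith hgood hy hx (le_of_eq hxy)
    constructor
    · rw [hAN, ← Finset.inf_id_eq_sInf, Finset.inf_image]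
      rw [Aux.NFsp, ← Finset.inf_eq_iInf]
      rfl
    · rw [finsum_mem_coe_finset, Finset.sum_image hinj, hAN]
      have hdim := Aux.dim_NFsp ρ (blk := blk) (K := K) (g := g) R
      omega
end
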